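/- Let g(x) = ax² + bx + c with a ≠ 0 and δ := b² − 4ac − 2b − 7 = 0. Then g has exactly one 3-cycle, and its three points are the roots of the cubic P₂(X) = 8a³X³ + 4a²(3b+1)X² + 2a(3b²+2b−9)X + b³ + b² − 9b − 1. -/

import Mathlib

/-- A set is a 3-cycle of the quadratic map g(x) = ax² + bx + c. -/
def IsThreeCycle (a b c : ℝ) (s : Set ℝ) : Prop :=
  ∃ x y z : ℝ, x ≠ y ∧ y ≠ z ∧ x ≠ z ∧ s = {x, y, z} ∧
    a * x ^ 2 + b * x + c = y ∧
    a * y ^ 2 + b * y + c = z ∧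
    a * z ^ 2 + b * z + c = x

/-- The cubic whose roots form the unique 3-cycle of u ↦ u² - 7/4. -/
noncomputable def Cpoly (u : ℝ) : ℝ := u ^ 3 + u ^ 2 / 2 - 9 * u / 4 - 1 / 8

lemma key_identity (u : ℝ) :
    ((u ^ 2 - 7 / 4) ^ 2 - 7 / 4) ^ 2 - 7 / 4 - u
      = (u ^ 2 - 7 / 4 - u) * (Cpoly u) ^ 2 := by
  unfold Cpoly; ring

lemma Cmap (u : ℝ) :
    Cpoly (u ^ 2 - 7 / 4) = Cpoly u * (u ^ 3 - u ^ 2 / 2 - 9 * u / 4 + 1 / 8) := by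
  unfold Cpoly; ring

lemma root_not_fix (p : ℝ) (h1 : Cpoly p = 0) (h2 : p ^ 2 - 7 / 4 = p) : False := by
  have h3 : p = -5 / 2 := by
    unfold Cpoly at h1; linear_combination h1 - (p + 3 / 2) * h2
  rw [h3] at h2; norm_num at h2

lemma cyc_root (p : ℝ) (hp : p = ((p ^ 2 - 7 / 4) ^ 2 - 7 / 4) ^ 2 - 7 / 4)
    (hne : p ≠ p ^ 2 - 7 / 4) : Cpoly p = 0 := by
  have h : (p ^ 2 - 7 / 4 - p) * (Cpoly p) ^ 2 = 0 := by
    unfold Cpoly; linear_combination -hp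
  have hne' : p ^ 2 - 7 / 4 - p ≠ 0 := fun h0 => hne (by linarith)
  have := (mul_eq_zero.mp h).resolve_left hne'
  exact pow_eq_zero_iff (by norm_num) |>.mp this

lemma cubic_roots (p q r t : ℝ) (hp : Cpoly p = 0) (hq : Cpoly q = 0) (hr : Cpoly r = 0)
    (hpq : p ≠ q) (hqr : q ≠ r) (hpr : p ≠ r) (ht : Cpoly t = 0) :
    t = p ∨ t = q ∨ t = r := by
  unfold Cpoly at hp hq hr ht
  have hA : p ^ 2 + p * q + q ^ 2 + (p + q) / 2 - 9 / 4 = 0 := by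
    have h : (p - q) * (p ^ 2 + p * q + q ^ 2 + (p + q) / 2 - 9 / 4) = 0 := by
      linear_combination hp - hq
    exact (mul_eq_zero.mp h).resolve_left (sub_ne_zero.mpr hpq)
  have hB : p ^ 2 + p * r + r ^ 2 + (p + r) / 2 - 9 / 4 = 0 := by
    have h : (p - r) * (p ^ 2 + p * r + r ^ 2 + (p + r) / 2 - 9 / 4) = 0 := by
      linear_combination hp - hr
    exact (mul_eq_zero.mp h).resolve_left (sub_ne_zero.mpr hpr)
  have he1 : p + q + r = -1 / 2 := by
    have h : (q - r) * (p + q + r + 1 / 2) = 0 := by linear_combination hA - hB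
    have := (mul_eq_zero.mp h).resolve_left (sub_ne_zero.mpr hqr)
    linarith
  have he2 : p * q + q * r + p * r = -9 / 4 := by
    linear_combination -hA + (p + q) * he1
  have he3 : p * q * r = 1 / 8 := by
    linear_combination -r * hA + hr + r * (p + q - r) * he1
  have hfact : (t - p) * (t - q) * (t - r) = 0 := by
    linear_combination ht - t ^ 2 * he1 + t * he2 - he3
  rcases mul_eq_zero.mp hfact with h | h
  · rcases mul_eq_zero.mp h with h | h
    · exact Or.inl (by linarith [sub_eq_zero.mp h])
    · exact Or.inr (Or.inl (by linarith [sub_eq_zero.mp h]))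
  · exact Or.inr (Or.inr (by linarith [sub_eq_zero.mp h]))

theorem stmt12 (a b c : ℝ) (ha : a ≠ 0)
    (hδ : b ^ 2 - 4 * a * c - 2 * b - 7 = 0) :
    (∃! s : Set ℝ, IsThreeCycle a b c s) ∧
    ∀ s : Set ℝ, IsThreeCycle a b c s →
      s = {X : ℝ | 8 * a ^ 3 * X ^ 3 + 4 * a ^ 2 * (3 * b + 1) * X ^ 2 +
        2 * a * (3 * b ^ 2 + 2 * b - 9) * X + b ^ 3 + b ^ 2 - 9 * b - 1 = 0} := by
  -- conjugation: a·g(x) + b/2 = (a·x + b/2)² - 7/4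
  have L1 : ∀ x : ℝ, a * (a * x ^ 2 + b * x + c) + b / 2 = (a * x + b / 2) ^ 2 - 7 / 4 := by
    intro x; linear_combination (-1 / 4) * hδ
  have uinj : ∀ s t : ℝ, a * s + b / 2 = a * t + b / 2 → s = t := by
    intro s t h
    exact mul_left_cancel₀ ha (by linarith)
  -- the target polynomial in terms of Cpoly
  have P2eq : ∀ X : ℝ, 8 * a ^ 3 * X ^ 3 + 4 * a ^ 2 * (3 * b + 1) * X ^ 2 +
      2 * a * (3 * b ^ 2 + 2 * b - 9) * X + b ^ 3 + b ^ 2 - 9 * b - 1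
      = 8 * Cpoly (a * X + b / 2) := by
    intro X; unfold Cpoly; ring
  -- every 3-cycle equals the root set of P₂
  have hmain : ∀ s : Set ℝ, IsThreeCycle a b c s →
      s = {X : ℝ | 8 * a ^ 3 * X ^ 3 + 4 * a ^ 2 * (3 * b + 1) * X ^ 2 +
        2 * a * (3 * b ^ 2 + 2 * b - 9) * X + b ^ 3 + b ^ 2 - 9 * b - 1 = 0} := by
    rintro s ⟨x, y, z, hxy, hyz, hxz, hs, hx, hy, hz⟩
    have hq : a * y + b / 2 = (a * x + b / 2) ^ 2 - 7 / 4 := by rw [← hx]; exact L1 x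
    have hr : a * z + b / 2 = (a * y + b / 2) ^ 2 - 7 / 4 := by rw [← hy]; exact L1 y
    have hp : a * x + b / 2 = (a * z + b / 2) ^ 2 - 7 / 4 := by rw [← hz]; exact L1 z
    have hpq : a * x + b / 2 ≠ a * y + b / 2 := fun h => hxy (uinj _ _ h)
    have hqr : a * y + b / 2 ≠ a * z + b / 2 := fun h => hyz (uinj _ _ h)
    have hpr : a * x + b / 2 ≠ a * z + b / 2 := fun h => hxz (uinj _ _ h)
    have hCx : Cpoly (a * x + b / 2) = 0 := by
      apply cyc_root
      · rw [← hq, ← hr, ← hp]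
      · rw [← hq]; exact hpq
    have hCy : Cpoly (a * y + b / 2) = 0 := by
      apply cyc_root
      · rw [← hr, ← hp, ← hq]
      · rw [← hr]; exact hqr
    have hCz : Cpoly (a * z + b / 2) = 0 := by
      apply cyc_root
      · rw [← hp, ← hq, ← hr]
      · rw [← hp]; exact fun h => hpr h.symm
    rw [hs]
    ext t
    simp only [Set.mem_insert_iff, Set.mem_singleton_iff, Set.mem_setOf_eq]
    constructor
    · rintro (rfl | rfl | rfl)
      · rw [P2eq t, hCx]; ring
      · rw [P2eq t, hCy]; ring
      · rw [P2eq t, hCz]; ring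
    · intro h
      rw [P2eq t] at h
      have hCt : Cpoly (a * t + b / 2) = 0 := by linarith
      rcases cubic_roots _ _ _ _ hCx hCy hCz hpq hqr hpr hCt with h' | h' | h'
      · exact Or.inl (uinj _ _ h')
      · exact Or.inr (Or.inl (uinj _ _ h'))
      · exact Or.inr (Or.inr (uinj _ _ h'))
  -- existence: find a real root of Cpoly by the intermediate value theorem
  have hcont : Continuous Cpoly := by unfold Cpoly; fun_prop
  have hivt := intermediate_value_Icc' (by norm_num : (-1 : ℝ) ≤ 0) hcont.continuousOn
  have h0mem : (0 : ℝ) ∈ Set.Icc (Cpoly 0) (Cpoly (-1)) := by unfold Cpoly; norm_num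
  obtain ⟨p, _, hp0⟩ := hivt h0mem
  -- build the cycle from p
  set x₀ : ℝ := (p - b / 2) / a with hx₀
  have hux : a * x₀ + b / 2 = p := by rw [hx₀, mul_div_cancel₀ _ ha]; ring
  set y₀ : ℝ := a * x₀ ^ 2 + b * x₀ + c with hy₀
  set z₀ : ℝ := a * y₀ ^ 2 + b * y₀ + c with hz₀
  have huy : a * y₀ + b / 2 = p ^ 2 - 7 / 4 := by rw [hy₀, L1 x₀, hux]
  have huz : a * z₀ + b / 2 = (p ^ 2 - 7 / 4) ^ 2 - 7 / 4 := by rw [hz₀, L1 y₀, huy]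
  have hCq : Cpoly (p ^ 2 - 7 / 4) = 0 := by rw [Cmap p, hp0]; ring
  have hCr : Cpoly ((p ^ 2 - 7 / 4) ^ 2 - 7 / 4) = 0 := by
    rw [Cmap (p ^ 2 - 7 / 4), hCq]; ring
  have h8 : ((p ^ 2 - 7 / 4) ^ 2 - 7 / 4) ^ 2 - 7 / 4 = p := by
    have h := key_identity p
    rw [hp0] at h
    nlinarith [h]
  have hgz : a * z₀ ^ 2 + b * z₀ + c = x₀ := by
    apply uinj
    rw [L1 z₀, huz, h8, hux]
  have hnf : p ≠ p ^ 2 - 7 / 4 := fun h => root_not_fix p hp0 h.symm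
  have hxy : x₀ ≠ y₀ := by
    intro h
    apply hnf
    calc p = a * x₀ + b / 2 := hux.symm
      _ = a * y₀ + b / 2 := by rw [h]
      _ = p ^ 2 - 7 / 4 := huy
  have hyz : y₀ ≠ z₀ := by
    intro h
    have h1 : (p ^ 2 - 7 / 4) ^ 2 - 7 / 4 = p ^ 2 - 7 / 4 := by
      calc (p ^ 2 - 7 / 4) ^ 2 - 7 / 4 = a * z₀ + b / 2 := huz.symm
        _ = a * y₀ + b / 2 := by rw [h]
        _ = p ^ 2 - 7 / 4 := huy
    exact root_not_fix _ hCq h1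
  have hxz : x₀ ≠ z₀ := by
    intro h
    have hpr : p = (p ^ 2 - 7 / 4) ^ 2 - 7 / 4 := by
      calc p = a * x₀ + b / 2 := hux.symm
        _ = a * z₀ + b / 2 := by rw [h]
        _ = (p ^ 2 - 7 / 4) ^ 2 - 7 / 4 := huz
    rw [← hpr] at h8
    exact root_not_fix p hp0 h8
  have hex : IsThreeCycle a b c {x₀, y₀, z₀} :=
    ⟨x₀, y₀, z₀, hxy, hyz, hxz, rfl, hy₀.symm, hz₀.symm, hgz⟩
  refine ⟨⟨{x₀, y₀, z₀}, hex, fun s hs => ?_⟩, hmain⟩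
  rw [hmain s hs, hmain _ hex]
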